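/- The Paley graph of order 13 (equivalently, the circulant graph on 13 vertices with distance set {1,3,4}) is a doubly saturated R(4,4)-good graph. -/

import Mathlib

set_option linter.unreachableTactic false
set_option linter.unusedTactic false

/-- The cyclic distance ‖x‖ = min(x mod n, n − (x mod n)) for x ∈ ℤ/nℤ. -/
def cyclicDist (n : ℕ) (x : ZMod n) : ℕ := min x.val (n - x.val)

/-- The circulant graph on `ZMod n` with distance set `S`: `x ~ y` iff `‖x - y‖ ∈ S`. -/
def circ (n : ℕ) (S : Set ℕ) : SimpleGraph (ZMod n) :=
  SimpleGraph.fromRel (fun x y => cyclicDist n (x - y) ∈ S)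

/-- `G` is `R(s,t)`-good: no clique of size `s` and no independent set of size `t`. -/
def RGood {V : Type*} (s t : ℕ) (G : SimpleGraph V) : Prop :=
  G.CliqueFree s ∧ Gᶜ.CliqueFree t

/-- `G` is doubly saturated `R(s,t)`-good. -/
def DoublySaturated {V : Type*} (s t : ℕ) (G : SimpleGraph V) : Prop :=
  RGood s t G ∧
  (∀ u v : V, u ≠ v → ¬ G.Adj u v → ¬ (G ⊔ SimpleGraph.edge u v).CliqueFree s) ∧
  (∀ u v : V, G.Adj u v → ¬ ((G.deleteEdges {s(u, v)})ᶜ.CliqueFree t)) ∧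
  G ≠ ⊤ ∧ Gᶜ ≠ ⊤

lemma cf4 {V : Type*} (G : SimpleGraph V) :
    G.CliqueFree 4 ↔ ∀ a b c d : V, G.Adj a b → G.Adj a c → G.Adj a d →
      G.Adj b c → G.Adj b d → G.Adj c d → False := by
  constructor
  · intro h a b c d hab hac had hbc hbd hcd
    rw [SimpleGraph.cliqueFree_iff, isEmpty_iff] at h
    apply h
    refine ⟨⟨![a,b,c,d], ?_⟩, ?_⟩
    · intro i j hij
      fin_cases i <;> fin_cases j <;> simp_all [hab.symm, hac.symm, had.symm, hbc.symm, hbd.symm, hcd.symm]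
    · intro i j
      fin_cases i <;> fin_cases j <;>
        simp [hab, hac, had, hbc, hbd, hcd, hab.symm, hac.symm, had.symm, hbc.symm, hbd.symm, hcd.symm,
          hab.ne, hac.ne, had.ne, hbc.ne, hbd.ne, hcd.ne, hab.ne.symm, hac.ne.symm, had.ne.symm, hbc.ne.symm, hbd.ne.symm, hcd.ne.symm]
  · intro h
    rw [SimpleGraph.cliqueFree_iff, isEmpty_iff]
    rintro f
    have adj : ∀ i j : Fin 4, i ≠ j → G.Adj (f i) (f j) := by
      intro i j hij
      exact f.toHom.map_adj (by simp [SimpleGraph.top_adj, hij])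
    exact h (f 0) (f 1) (f 2) (f 3)
      (adj 0 1 (by decide)) (adj 0 2 (by decide)) (adj 0 3 (by decide))
      (adj 1 2 (by decide)) (adj 1 3 (by decide)) (adj 2 3 (by decide))

instance instAdjDec : DecidableRel (circ 13 {1,3,4}).Adj := fun x y =>
  decidable_of_iff (x ≠ y ∧ ((cyclicDist 13 (x-y) = 1 ∨ cyclicDist 13 (x-y) = 3 ∨ cyclicDist 13 (x-y) = 4) ∨ (cyclicDist 13 (y-x) = 1 ∨ cyclicDist 13 (y-x) = 3 ∨ cyclicDist 13 (y-x) = 4))) (by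
    simp [circ, SimpleGraph.fromRel_adj, Set.mem_insert_iff, Set.mem_singleton_iff])

set_option synthInstance.maxSize 2000
set_option synthInstance.maxHeartbeats 1000000
set_option maxRecDepth 10000
set_option maxHeartbeats 2000000

lemma satAdd : ∀ u v : ZMod 13, u ≠ v → ¬ (circ 13 {1,3,4}).Adj u v →
    ∃ a b : ZMod 13, (circ 13 {1,3,4}).Adj u a ∧ (circ 13 {1,3,4}).Adj u b ∧
      (circ 13 {1,3,4}).Adj v a ∧ (circ 13 {1,3,4}).Adj v b ∧ (circ 13 {1,3,4}).Adj a b := by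
  decide

lemma satDel : ∀ u v : ZMod 13, (circ 13 {1,3,4}).Adj u v →
    ∃ a b : ZMod 13, a ≠ b ∧ a ≠ u ∧ a ≠ v ∧ b ≠ u ∧ b ≠ v ∧
      ¬ (circ 13 {1,3,4}).Adj u a ∧ ¬ (circ 13 {1,3,4}).Adj u b ∧
      ¬ (circ 13 {1,3,4}).Adj v a ∧ ¬ (circ 13 {1,3,4}).Adj v b ∧
      ¬ (circ 13 {1,3,4}).Adj a b := by
  decide

theorem stmt_12 : DoublySaturated 4 4 (circ 13 {1, 3, 4}) := by
  refine ⟨⟨?_, ?_⟩, ?_, ?_, ?_, ?_⟩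
  · rw [cf4]; decide
  · rw [cf4]; decide
  · intro u v huv hna hcf
    rw [cf4] at hcf
    obtain ⟨a, b, hua, hub, hva, hvb, hab⟩ := satAdd u v huv hna
    exact hcf u v a b
      (Or.inr (by rw [SimpleGraph.edge_adj]; exact ⟨Or.inl ⟨rfl, rfl⟩, huv⟩))
      (Or.inl hua) (Or.inl hub) (Or.inl hva) (Or.inl hvb) (Or.inl hab)
  · intro u v huv hcf
    rw [cf4] at hcf
    obtain ⟨a, b, hab, hau, hav, hbu, hbv, hua, hub, hva, hvb, hnab⟩ := satDel u v huv
    have hc : ∀ x y : ZMod 13, x ≠ y → ¬ (circ 13 {1,3,4}).Adj x y →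
        ((circ 13 {1,3,4}).deleteEdges {s(u,v)})ᶜ.Adj x y := by
      intro x y hxy hnxy
      exact ⟨hxy, fun h => hnxy h.1⟩
    have huvc : ((circ 13 {1,3,4}).deleteEdges {s(u,v)})ᶜ.Adj u v := by
      refine ⟨huv.ne, fun h => ?_⟩
      exact (SimpleGraph.deleteEdges_adj.mp h).2 (Set.mem_singleton _)
    refine hcf u v a b huvc
      (hc u a (Ne.symm hau) hua) (hc u b (Ne.symm hbu) hub)
      (hc v a (Ne.symm hav) hva) (hc v b (Ne.symm hbv) hvb)
      (hc a b hab hnab)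
  · intro h
    have : (circ 13 {1,3,4}).Adj 0 2 := by rw [h]; simp [SimpleGraph.top_adj]; decide
    exact (by decide : ¬ (circ 13 {1,3,4}).Adj 0 2) this
  · intro h
    have : (circ 13 {1,3,4})ᶜ.Adj 0 1 := by rw [h]; simp [SimpleGraph.top_adj]; decide
    exact (by decide : ¬ (circ 13 {1,3,4})ᶜ.Adj 0 1) this
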